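/- For parameters λ, ν with 0 ≤ ν < 1 and 2√ν < λ < 1+ν, set q = √(λ²−4ν) and α = 4(λ+q)(λ+2−q)(λ−2−q)/((λ−q)(λ+2+q)(λ−2+q)), c = q/(1−ν). Then with b = 2c/(1+c²) one has the identity 2b(1+c)² − (1+b)cα ≠ 0 and the ratio −(−1+b)(−1+c)²(cα+b(−2(1+c)²+cα))² / ((1+b)(1+c)²(cα−b(2(−1+c)²+cα))²) equals 1, i.e., the conical-singularity-free condition Δψ = 2π holds. -/

import Mathlib

set_option maxHeartbeats 1600000 in
theorem stmt_13 (lam nu q α c b : ℝ) (hnu0 : 0 ≤ nu) (hnu1 : nu < 1)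
    (hlam1 : 2 * Real.sqrt nu < lam) (hlam2 : lam < 1 + nu)
    (hq : q = Real.sqrt (lam ^ 2 - 4 * nu))
    (hα : α = 4 * ((lam + q) * (lam + 2 - q) * (lam - 2 - q)) /
        ((lam - q) * (lam + 2 + q) * (lam - 2 + q)))
    (hc : c = q / (1 - nu))
    (hb : b = 2 * c / (1 + c ^ 2)) :
    2 * b * (1 + c) ^ 2 - (1 + b) * c * α ≠ 0 ∧
    (-(-1 + b) * (-1 + c) ^ 2 * (c * α + b * (-2 * (1 + c) ^ 2 + c * α)) ^ 2) /
      ((1 + b) * (1 + c) ^ 2 * (c * α - b * (2 * (-1 + c) ^ 2 + c * α)) ^ 2) = 1 := by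
  have hsqnu : Real.sqrt nu ^ 2 = nu := Real.sq_sqrt hnu0
  have hsqnn : 0 ≤ Real.sqrt nu := Real.sqrt_nonneg nu
  have hlampos : 0 < lam := lt_of_le_of_lt (by positivity) hlam1
  have hq2 : 0 < lam ^ 2 - 4 * nu := by nlinarith
  have hqpos : 0 < q := by rw [hq]; exact Real.sqrt_pos.mpr hq2
  have hqsq : q ^ 2 = lam ^ 2 - 4 * nu := by rw [hq]; exact Real.sq_sqrt hq2.le
  have hs : 0 < 1 - nu := by linarith
  have hqlt : q < 1 - nu := by nlinarith
  have hc0 : 0 < c := by rw [hc]; positivity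
  have hc1 : c < 1 := by rw [hc, div_lt_one hs]; exact hqlt
  -- α ≠ 4
  have halpha : α ≠ 4 := by
    rcases eq_or_lt_of_le hnu0 with h0 | h0
    · -- nu = 0 : denominator vanishes, α = 0
      have hql : q = lam := by nlinarith
      have : (lam - q) * (lam + 2 + q) * (lam - 2 + q) = 0 := by
        rw [hql]; ring
      rw [hα, this, div_zero]; norm_num
    · -- nu > 0
      have hlq : q < lam := by nlinarith
      have hd3 : lam - 2 + q < 0 := by nlinarith
      have hden : (lam - q) * (lam + 2 + q) * (lam - 2 + q) ≠ 0 := by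
        have : (lam - q) * (lam + 2 + q) * (lam - 2 + q) < 0 := by
          have h1 : 0 < lam - q := by linarith
          have h2 : 0 < lam + 2 + q := by linarith
          nlinarith
        exact ne_of_lt this
      intro h4
      rw [hα] at h4
      have h5 : 4 * ((lam + q) * (lam + 2 - q) * (lam - 2 - q)) =
          4 * ((lam - q) * (lam + 2 + q) * (lam - 2 + q)) := by
        rw [div_eq_iff hden] at h4; linarith [h4]
      nlinarith [h5, hqsq, hqpos, h0]
  have hc2 : (1 : ℝ) + c ^ 2 ≠ 0 := by positivity
  have key1 : (2 * b * (1 + c) ^ 2 - (1 + b) * c * α) * (1 + c ^ 2)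
      = (1 + c) ^ 2 * c * (4 - α) := by
    rw [hb]; field_simp; ring
  have key2 : (c * α - b * (2 * (-1 + c) ^ 2 + c * α)) * (1 + c ^ 2)
      = (1 - c) ^ 2 * c * (α - 4) := by
    rw [hb]; field_simp; ring
  constructor
  · intro h
    have h4 : (1 + c) ^ 2 * c * (4 - α) = 0 := by rw [← key1, h, zero_mul]
    have := (mul_eq_zero.mp h4).resolve_left (by positivity : (1 + c) ^ 2 * c ≠ 0)
    exact halpha (by linarith)
  · have hY : c * α - b * (2 * (-1 + c) ^ 2 + c * α) ≠ 0 := by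
      intro h
      have h4 : (1 - c) ^ 2 * c * (α - 4) = 0 := by rw [← key2, h, zero_mul]
      have hne : (1 - c) ^ 2 * c ≠ 0 := by
        have : 0 < (1 - c) ^ 2 * c := by
          have : 0 < 1 - c := by linarith
          positivity
        exact ne_of_gt this
      have := (mul_eq_zero.mp h4).resolve_left hne
      exact halpha (by linarith)
    have hbpos : 0 < b := by rw [hb]; positivity
    have hD : (1 + b) * (1 + c) ^ 2 * (c * α - b * (2 * (-1 + c) ^ 2 + c * α)) ^ 2 ≠ 0 := by
      exact mul_ne_zero (mul_ne_zero (by positivity) (by positivity)) (pow_ne_zero 2 hY)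
    have e1 : -1 + b = -((1 - c) ^ 2 / (1 + c ^ 2)) := by
      rw [hb]; field_simp; ring
    have e2 : 1 + b = (1 + c) ^ 2 / (1 + c ^ 2) := by
      rw [hb]; field_simp; ring
    have key3 : (c * α + b * (-2 * (1 + c) ^ 2 + c * α)) * (1 + c ^ 2)
        = (1 + c) ^ 2 * c * (α - 4) := by
      rw [hb]; field_simp; ring
    have hX : c * α + b * (-2 * (1 + c) ^ 2 + c * α)
        = (1 + c) ^ 2 * c * (α - 4) / (1 + c ^ 2) := eq_div_of_mul_eq hc2 key3
    have hY2 : c * α - b * (2 * (-1 + c) ^ 2 + c * α)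
        = (1 - c) ^ 2 * c * (α - 4) / (1 + c ^ 2) := eq_div_of_mul_eq hc2 key2
    rw [div_eq_one_iff_eq hD, hX, hY2, e1, e2]
    field_simp
    ring
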